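/- Let H be a connected hypergraph with positive weights, let G be its clique expansion with graph effective resistance R_eff^G, and define the hypergraph effective resistance R_H(p,q) = sup_{Q_H(χ)>0} (χ^T b_pq)^2 / Q_H(χ). Then R_eff^G(p,q) ≤ R_H(p,q) ≤ (max_e (|e| choose 2)) · R_eff^G(p,q) for all p ≠ q. -/

import Mathlib

open Finset Matrix

/-- The nonlinear hypergraph quadratic form
`Q_H(χ) = ∑ₑ wₑ · max_{u,v ∈ e} (χᵤ - χᵥ)²`. -/
noncomputable def QH {V E : Type*} [Fintype E] (w : E → ℝ) (mem : E → Finset V)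
    (hne : ∀ e, (mem e).Nonempty) (χ : V → ℝ) : ℝ :=
  ∑ e, w e *
    ((mem e ×ˢ mem e).sup' ((hne e).product (hne e))
      fun p => (χ p.1 - χ p.2) ^ 2)

/-- The Laplacian quadratic form of the clique expansion (each unordered pair
of distinct vertices in a hyperedge counted once). -/
noncomputable def cliqueQ {V E : Type*} [Fintype E] [DecidableEq V]
    (w : E → ℝ) (mem : E → Finset V) (χ : V → ℝ) : ℝ :=
  ∑ e, w e * ((1 : ℝ) / 2 *
    ∑ p ∈ (mem e ×ˢ mem e).filter (fun p => p.1 ≠ p.2), (χ p.1 - χ p.2) ^ 2)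


lemma sup'_sq_nonneg {V : Type*} (s : Finset V) (hs : s.Nonempty) (χ : V → ℝ) :
    0 ≤ (s ×ˢ s).sup' (hs.product hs) (fun p => (χ p.1 - χ p.2) ^ 2) := by
  obtain ⟨u, hu⟩ := hs
  have h := Finset.le_sup' (f := fun p : V × V => (χ p.1 - χ p.2) ^ 2)
    (Finset.mem_product.mpr ⟨hu, hu⟩ : ((u, u) : V × V) ∈ s ×ˢ s)
  simp at h; exact h

lemma edge_lower {V : Type*} [DecidableEq V] (s : Finset V) (hs : s.Nonempty) (χ : V → ℝ) :
    (s ×ˢ s).sup' (hs.product hs) (fun p => (χ p.1 - χ p.2) ^ 2) ≤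
    1/2 * ∑ p ∈ (s ×ˢ s).filter (fun p => p.1 ≠ p.2), (χ p.1 - χ p.2) ^ 2 := by
  obtain ⟨a, ha, hEq⟩ := Finset.exists_mem_eq_sup' (hs.product hs)
    (fun p : V × V => (χ p.1 - χ p.2) ^ 2)
  have hsum_nonneg : (0:ℝ) ≤ ∑ p ∈ (s ×ˢ s).filter (fun p => p.1 ≠ p.2), (χ p.1 - χ p.2) ^ 2 :=
    Finset.sum_nonneg fun p _ => sq_nonneg _
  by_cases hd : a.1 = a.2
  · rw [hEq]
    simp [hd]
    linarith
  · have hswap : a ≠ (a.2, a.1) := by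
      intro h; apply hd; rw [Prod.ext_iff] at h; exact h.1
    have hsub : ({a, (a.2, a.1)} : Finset (V × V)) ⊆
        (s ×ˢ s).filter (fun p => p.1 ≠ p.2) := by
      intro x hx
      simp only [Finset.mem_insert, Finset.mem_singleton] at hx
      rcases hx with rfl | rfl
      · exact Finset.mem_filter.mpr ⟨ha, hd⟩
      · refine Finset.mem_filter.mpr ⟨?_, fun h => hd h.symm⟩
        rw [Finset.mem_product] at ha ⊢
        exact ⟨ha.2, ha.1⟩
    have hpair : ∑ p ∈ ({a, (a.2, a.1)} : Finset (V × V)), (χ p.1 - χ p.2) ^ 2 =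
        2 * (χ a.1 - χ a.2) ^ 2 := by
      rw [Finset.sum_pair (f := fun p : V × V => (χ p.1 - χ p.2) ^ 2) hswap]; ring
    have := Finset.sum_le_sum_of_subset_of_nonneg (f := fun p : V × V => (χ p.1 - χ p.2) ^ 2) hsub (fun p _ _ => sq_nonneg _)
    rw [hpair] at this
    rw [hEq]
    linarith

lemma offdiag_card_eq {V : Type*} [DecidableEq V] (s : Finset V) :
    ((s ×ˢ s).filter (fun p => p.1 ≠ p.2)).card = 2 * s.card.choose 2 := by
  have h1 : (s ×ˢ s).filter (fun p => p.1 ≠ p.2) = s.offDiag := by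
    ext x; simp [Finset.mem_offDiag, Finset.mem_product, and_assoc]
  rw [h1, Finset.offDiag_card, Nat.choose_two_right]
  have heven : Even (s.card * (s.card - 1)) := by
    rcases hn : s.card with _ | m
    · simp
    · simpa [Nat.mul_comm] using Nat.even_mul_succ_self m
  rw [Nat.two_mul_div_two_of_even heven, Nat.mul_sub, Nat.mul_one]

lemma edge_upper {V : Type*} [DecidableEq V] (s : Finset V) (hs : s.Nonempty) (χ : V → ℝ) :
    1/2 * ∑ p ∈ (s ×ˢ s).filter (fun p => p.1 ≠ p.2), (χ p.1 - χ p.2) ^ 2 ≤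
    (s.card.choose 2 : ℝ) *
      (s ×ˢ s).sup' (hs.product hs) (fun p => (χ p.1 - χ p.2) ^ 2) := by
  set m := (s ×ˢ s).sup' (hs.product hs) (fun p => (χ p.1 - χ p.2) ^ 2) with hm
  have hsum : ∑ p ∈ (s ×ˢ s).filter (fun p => p.1 ≠ p.2), (χ p.1 - χ p.2) ^ 2 ≤
      ((s ×ˢ s).filter (fun p => p.1 ≠ p.2)).card • m := by
    apply Finset.sum_le_card_nsmul
    intro x hx
    exact Finset.le_sup' (f := fun p : V × V => (χ p.1 - χ p.2) ^ 2) (Finset.mem_filter.mp hx).1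
  rw [offdiag_card_eq] at hsum
  rw [nsmul_eq_mul] at hsum
  push_cast at hsum
  linarith

/-- the hypergraph effective resistance is sandwiched by the
clique-expansion effective resistance:
`R_eff^G(p,q) ≤ R_H(p,q) ≤ (maxₑ (|e| choose 2)) · R_eff^G(p,q)`. -/
theorem hypergraph_resistance_sandwich
    {V E : Type*} [Fintype V] [Fintype E] [DecidableEq V]
    (w : E → ℝ) (mem : E → Finset V)
    (hne : ∀ e, (mem e).Nonempty) (hw : ∀ e, 0 < w e)
    (hsize : ∀ e, 2 ≤ (mem e).card)
    (hconn : ∀ u v : V,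
      Relation.ReflTransGen (fun a b : V => ∃ e, a ∈ mem e ∧ b ∈ mem e) u v)
    (p q : V) (hpq : p ≠ q)
    (b : V → ℝ) (hb : b = (Pi.single p 1 - Pi.single q 1 : V → ℝ))
    (RH RG : ℝ)
    (hRH : IsLUB {r : ℝ | ∃ χ : V → ℝ, 0 < QH w mem hne χ ∧
      r = (χ ⬝ᵥ b) ^ 2 / QH w mem hne χ} RH)
    (hRG : IsLUB {r : ℝ | ∃ χ : V → ℝ, 0 < cliqueQ w mem χ ∧
      r = (χ ⬝ᵥ b) ^ 2 / cliqueQ w mem χ} RG) :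
    RG ≤ RH ∧
      RH ≤ ((Finset.univ.sup fun e : E => (mem e).card.choose 2 : ℕ) : ℝ) * RG := by
  classical
  set C : ℝ := ((Finset.univ.sup fun e : E => (mem e).card.choose 2 : ℕ) : ℝ) with hCdef
  have hCnn : 0 ≤ C := by positivity
  have hQnn : ∀ χ : V → ℝ, 0 ≤ QH w mem hne χ := by
    intro χ
    apply Finset.sum_nonneg
    intro e _
    exact mul_nonneg (hw e).le (sup'_sq_nonneg (mem e) (hne e) χ)
  have hQle : ∀ χ : V → ℝ, QH w mem hne χ ≤ cliqueQ w mem χ := by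
    intro χ
    unfold QH cliqueQ
    apply Finset.sum_le_sum
    intro e _
    exact mul_le_mul_of_nonneg_left (edge_lower (mem e) (hne e) χ) (hw e).le
  have hCle : ∀ χ : V → ℝ, cliqueQ w mem χ ≤ C * QH w mem hne χ := by
    intro χ
    unfold QH cliqueQ
    rw [Finset.mul_sum]
    apply Finset.sum_le_sum
    intro e _
    have h1 := edge_upper (mem e) (hne e) χ
    have hm := sup'_sq_nonneg (mem e) (hne e) χ
    have hCe : ((mem e).card.choose 2 : ℝ) ≤ C := by
      rw [hCdef]
      exact Nat.cast_le.mpr (Finset.le_sup (f := fun e : E => (mem e).card.choose 2) (Finset.mem_univ e))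
    nlinarith [mul_le_mul_of_nonneg_left h1 (hw e).le,
      mul_le_mul_of_nonneg_left (mul_le_mul_of_nonneg_right hCe hm) (hw e).le]
  constructor
  · apply hRG.2
    rintro r ⟨χ, hpos, rfl⟩
    have hQpos : 0 < QH w mem hne χ := by
      rcases lt_or_eq_of_le (hQnn χ) with h | h
      · exact h
      · exfalso
        have := hCle χ
        rw [← h] at this
        simp at this
        linarith
    have hle : (χ ⬝ᵥ b) ^ 2 / cliqueQ w mem χ ≤ (χ ⬝ᵥ b) ^ 2 / QH w mem hne χ := by
      apply div_le_div_of_nonneg_left (sq_nonneg _) hQpos (hQle χ)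
    exact le_trans hle (hRH.1 ⟨χ, hQpos, rfl⟩)
  · apply hRH.2
    rintro r ⟨χ, hQpos, rfl⟩
    have hCpos : 0 < cliqueQ w mem χ := lt_of_lt_of_le hQpos (hQle χ)
    have h1 : (χ ⬝ᵥ b) ^ 2 / cliqueQ w mem χ ≤ RG := hRG.1 ⟨χ, hCpos, rfl⟩
    have key := mul_le_mul_of_nonneg_left (hCle χ)
      (div_nonneg (sq_nonneg (χ ⬝ᵥ b)) hCpos.le)
    rw [mul_comm ((χ ⬝ᵥ b) ^ 2 / cliqueQ w mem χ) (cliqueQ w mem χ),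
      mul_div_cancel₀ _ hCpos.ne'] at key
    have h2 : (χ ⬝ᵥ b) ^ 2 / QH w mem hne χ ≤ C * ((χ ⬝ᵥ b) ^ 2 / cliqueQ w mem χ) := by
      rw [div_le_iff₀ hQpos]
      nlinarith [key]
    exact le_trans h2 (mul_le_mul_of_nonneg_left h1 hCnn)
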